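/- The set IFT of ill-founded trees is a complete analytic set: (1) IFT is an analytic subset of the Polish space (List ℕ → Bool); (2) for every Polish space X and every analytic subset A ⊆ X there exists a Borel measurable function f : X → (List ℕ → Bool), taking values in the set Trees, such that for all x ∈ X: x ∈ A if and only if f x ∈ IFT; (3) IFT is not a Borel subset of (List ℕ → Bool). -/

import Mathlib

/-- A tree on `ℕ`, coded by its characteristic function: a set of finite sequences closed
under initial segments. -/
def IsTree (T : List ℕ → Bool) : Prop :=
  ∀ s t : List ℕ, T s = true → t <+: s → T t = true

/-- A tree (coded by a characteristic function) is ill-founded if it has an infinite branch. -/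
def IllFounded (T : List ℕ → Bool) : Prop :=
  ∃ f : ℕ → ℕ, ∀ n : ℕ, T (List.ofFn fun i : Fin n => f i) = true

/-- The set of (characteristic functions of) trees. -/
def Trees : Set (List ℕ → Bool) := {T | IsTree T}

/-- The set of ill-founded trees. -/
def IFT : Set (List ℕ → Bool) := {T | IsTree T ∧ IllFounded T}

open MeasureTheory Set Filter Topology

section Helpers

/-- Matching a function against a finite list. -/
def Matches {β : Type} (y : ℕ → β) (s : List β) : Prop :=
  ∀ i : Fin s.length, y ↑i = s.get i

lemma matches_ofFn {β : Type} (y : ℕ → β) (n : ℕ) :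
    Matches y (List.ofFn fun i : Fin n => y ↑i) := by
  intro i
  simp [List.get_ofFn]

lemma Matches.of_prefix {β : Type} {y : ℕ → β} {s t : List β}
    (h : Matches y s) (hp : t <+: s) : Matches y t := by
  intro i
  have hi : (i : ℕ) < s.length := lt_of_lt_of_le i.2 hp.length_le
  have := h ⟨i, hi⟩
  simp only [List.get_eq_getElem] at this ⊢
  rw [hp.getElem i.2]
  exact this

lemma Matches.eq_of_ofFn {β : Type} {y b : ℕ → β} {n : ℕ}
    (h : Matches y (List.ofFn fun i : Fin n => b ↑i)) {i : ℕ} (hi : i < n) :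
    y i = b i := by
  have := h ⟨i, by simp [hi]⟩
  simpa using this

lemma not_countable_nat_bool : ¬ Countable (ℕ → Bool) := by
  intro h
  obtain ⟨g, hg⟩ := (exists_injective_nat (ℕ → Bool))
  set h' := Function.invFun g with hh'
  have hs : Function.LeftInverse h' g := Function.leftInverse_invFun hg
  set d : ℕ → Bool := fun n => !(h' n n) with hd
  have : h' (g d) = d := hs d
  have h2 : d (g d) = !(d (g d)) := by
    conv_lhs => rw [hd]
    simp only []
    rw [this]
  exact (Bool.not_ne_self _).symm h2

lemma not_countable_baire : ¬ Countable (ℕ → ℕ) := by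
  intro h
  have : Function.Injective (fun (f : ℕ → Bool) (n : ℕ) => (f n).toNat) := by
    intro f g hfg
    funext n
    have := congrFun hfg n
    rcases Bool.dichotomy (f n) with h1 | h1 <;> rcases Bool.dichotomy (g n) with h2 | h2 <;>
      simp [h1, h2] at this ⊢
  exact not_countable_nat_bool (this.countable)

lemma not_countable_code : ¬ Countable (List (ℕ × ℕ) → Bool) := by
  intro h
  have : Function.Injective (fun (f : ℕ → Bool) (l : List (ℕ × ℕ)) => f l.length) := by
    intro f g hfg
    funext n
    have := congrFun hfg (List.replicate n (0, 0))
    simpa using this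
  exact not_countable_nat_bool (this.countable)

end Helpers


section Meas

variable {β : Type} [MeasurableSpace β] [MeasurableSingletonClass β] [Countable β]

lemma measurable_eval_branch (n : ℕ) :
    Measurable (fun p : (List β → Bool) × (ℕ → β) =>
      p.1 (List.ofFn fun i : Fin n => p.2 ↑i)) := by
  apply measurable_to_countable'
  intro b
  have heq : (fun p : (List β → Bool) × (ℕ → β) =>
        p.1 (List.ofFn fun i : Fin n => p.2 ↑i)) ⁻¹' {b}
      = ⋃ v : Fin n → β, {p : (List β → Bool) × (ℕ → β) |
          (∀ i : Fin n, p.2 ↑i = v i) ∧ p.1 (List.ofFn v) = b} := by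
    ext p
    simp only [mem_preimage, mem_singleton_iff, mem_iUnion, mem_setOf_eq]
    constructor
    · intro h
      exact ⟨fun i => p.2 ↑i, fun i => rfl, h⟩
    · rintro ⟨v, hv, hb⟩
      have : (List.ofFn fun i : Fin n => p.2 ↑i) = List.ofFn v := by
        congr 1
        funext i
        exact hv i
      rw [this]
      exact hb
  rw [heq]
  apply MeasurableSet.iUnion
  intro v
  have h1 : MeasurableSet {p : (List β → Bool) × (ℕ → β) | ∀ i : Fin n, p.2 ↑i = v i} := by
    have : {p : (List β → Bool) × (ℕ → β) | ∀ i : Fin n, p.2 ↑i = v i}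
        = ⋂ i : Fin n, (fun p : (List β → Bool) × (ℕ → β) => p.2 ↑i) ⁻¹' {v i} := by
      ext p; simp
    rw [this]
    exact MeasurableSet.iInter fun i =>
      ((measurable_pi_apply _).comp measurable_snd) (measurableSet_singleton _)
  have h2 : MeasurableSet {p : (List β → Bool) × (ℕ → β) | p.1 (List.ofFn v) = b} := by
    exact ((measurable_pi_apply _).comp measurable_fst) (measurableSet_singleton _)
  have : {p : (List β → Bool) × (ℕ → β) |
      (∀ i : Fin n, p.2 ↑i = v i) ∧ p.1 (List.ofFn v) = b}
      = {p : (List β → Bool) × (ℕ → β) | ∀ i : Fin n, p.2 ↑i = v i}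
        ∩ {p : (List β → Bool) × (ℕ → β) | p.1 (List.ofFn v) = b} := rfl
  rw [this]
  exact h1.inter h2

end Meas


lemma measurableSet_trees_fst {γ : Type} [MeasurableSpace γ] {F : γ → List ℕ → Bool}
    (hF : Measurable F) : MeasurableSet {c : γ | IsTree (F c)} := by
  have : {c : γ | IsTree (F c)} =
      ⋂ s : List ℕ, ⋂ t : List ℕ, ⋂ (_ : t <+: s),
        ({c : γ | F c s = true}ᶜ ∪ {c : γ | F c t = true}) := by
    ext c
    simp only [mem_setOf_eq, mem_iInter, IsTree, mem_union, mem_compl_iff]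
    constructor
    · intro h s t hts
      rcases Bool.dichotomy (F c s) with h1 | h1
      · exact Or.inl (by simp [h1])
      · exact Or.inr (h s t h1 hts)
    · intro h s t h1 hts
      rcases h s t hts with h2 | h2
      · exact absurd h1 h2
      · exact h2
  rw [this]
  refine MeasurableSet.iInter fun s => MeasurableSet.iInter fun t => MeasurableSet.iInter fun _ => ?_
  have hs : MeasurableSet {c : γ | F c s = true} :=
    ((measurable_pi_apply s).comp hF) (measurableSet_singleton true)
  have ht : MeasurableSet {c : γ | F c t = true} :=
    ((measurable_pi_apply t).comp hF) (measurableSet_singleton true)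
  exact hs.compl.union ht

instance instPolishListBool : PolishSpace (List ℕ → Bool) := by
  haveI : TopologicalSpace.SeparableSpace (List ℕ → Bool) := inferInstance
  haveI : TopologicalSpace.IsCompletelyMetrizableSpace (List ℕ → Bool) := inferInstance
  infer_instance

instance instPolishCode : PolishSpace (List (ℕ × ℕ) → Bool) := by
  haveI : TopologicalSpace.SeparableSpace (List (ℕ × ℕ) → Bool) := inferInstance
  haveI : TopologicalSpace.IsCompletelyMetrizableSpace (List (ℕ × ℕ) → Bool) := inferInstance
  infer_instance

lemma analytic_IFT : AnalyticSet IFT := by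
  set C1 : Set ((List ℕ → Bool) × (ℕ → ℕ)) :=
    {p | IsTree p.1 ∧ ∀ n : ℕ, p.1 (List.ofFn fun i : Fin n => p.2 ↑i) = true} with hC1
  have hmeas : MeasurableSet C1 := by
    have h1 : MeasurableSet {p : (List ℕ → Bool) × (ℕ → ℕ) | IsTree p.1} :=
      measurableSet_trees_fst measurable_fst
    have h2 : MeasurableSet {p : (List ℕ → Bool) × (ℕ → ℕ) |
        ∀ n : ℕ, p.1 (List.ofFn fun i : Fin n => p.2 ↑i) = true} := by
      have : {p : (List ℕ → Bool) × (ℕ → ℕ) |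
          ∀ n : ℕ, p.1 (List.ofFn fun i : Fin n => p.2 ↑i) = true}
          = ⋂ n : ℕ, (fun p : (List ℕ → Bool) × (ℕ → ℕ) =>
              p.1 (List.ofFn fun i : Fin n => p.2 ↑i)) ⁻¹' {true} := by
        ext p; simp
      rw [this]
      exact MeasurableSet.iInter fun n =>
        (measurable_eval_branch n) (measurableSet_singleton true)
    exact h1.inter h2
  have himg : IFT = Prod.fst '' C1 := by
    ext T
    constructor
    · rintro ⟨hT, f, hf⟩
      exact ⟨(T, f), ⟨hT, hf⟩, rfl⟩
    · rintro ⟨⟨T', f⟩, ⟨hT, hf⟩, rfl⟩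
      exact ⟨hT, f, hf⟩
  rw [himg]
  exact hmeas.analyticSet.image_of_continuous continuous_fst


/-- helper: measurability of decide-membership -/
lemma measurable_decide_mem {X : Type*} [MeasurableSpace X] {S : Set X}
    (hS : MeasurableSet S) (d : ∀ x, Decidable (x ∈ S)) :
    Measurable (fun x => @decide (x ∈ S) (d x)) := by
  apply measurable_to_countable'
  intro b
  cases b
  · have : (fun x => @decide (x ∈ S) (d x)) ⁻¹' {false} = Sᶜ := by
      ext x; simp [mem_preimage, decide_eq_false_iff_not]
    rw [this]; exact hS.compl
  · have : (fun x => @decide (x ∈ S) (d x)) ⁻¹' {true} = S := by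
      ext x; simp [mem_preimage]
    rw [this]; exact hS

theorem part2 : ∀ (X : Type) [TopologicalSpace X] [PolishSpace X] [MeasurableSpace X]
      [BorelSpace X] (A : Set X), MeasureTheory.AnalyticSet A →
      ∃ f : X → (List ℕ → Bool), Measurable f ∧ (∀ x, f x ∈ Trees) ∧
        ∀ x : X, x ∈ A ↔ f x ∈ IFT := by
  intro X _ _ _ _ A hA
  classical
  rw [MeasureTheory.AnalyticSet_def] at hA
  rcases hA with rfl | ⟨g, hg, hrange⟩
  · refine ⟨fun _ _ => false, measurable_const, ?_, ?_⟩
    · intro x s t h _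
      exact absurd h (by simp)
    · intro x
      simp only [mem_empty_iff_false, false_iff]
      rintro ⟨-, f, hf⟩
      exact absurd (hf 0) (by simp)
  · letI := TopologicalSpace.upgradeIsCompletelyMetrizable X
    set P : X → List ℕ → Prop := fun x s =>
      ∃ y : ℕ → ℕ, Matches y s ∧ dist x (g y) < (1/2 : ℝ) ^ s.length with hP
    refine ⟨fun x s => decide (P x s), ?_, ?_, ?_⟩
    · rw [measurable_pi_iff]
      intro s
      have hopen : IsOpen {x : X | P x s} := by
        have : {x : X | P x s} = ⋃ y : ℕ → ℕ, ⋃ (_ : Matches y s),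
            Metric.ball (g y) ((1/2 : ℝ) ^ s.length) := by
          ext x
          simp only [mem_setOf_eq, mem_iUnion, Metric.mem_ball, hP]
          constructor
          · rintro ⟨y, h1, h2⟩; exact ⟨y, h1, h2⟩
          · rintro ⟨y, h1, h2⟩; exact ⟨y, h1, h2⟩
        rw [this]
        exact isOpen_iUnion fun y => isOpen_iUnion fun _ => Metric.isOpen_ball
      have := measurable_decide_mem hopen.measurableSet (fun x => inferInstance)
      convert this
      exact Iff.rfl
    · intro x s t hs hts
      rw [decide_eq_true_iff] at hs ⊢
      obtain ⟨y, hy, hd⟩ := hs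
      refine ⟨y, hy.of_prefix hts, lt_of_lt_of_le hd ?_⟩
      exact pow_le_pow_of_le_one (by norm_num) (by norm_num) hts.length_le
    · intro x
      have htree : IsTree (fun s => decide (P x s)) := by
        intro s t hs hts
        rw [decide_eq_true_iff] at hs ⊢
        obtain ⟨y, hy, hd⟩ := hs
        exact ⟨y, hy.of_prefix hts, lt_of_lt_of_le hd
          (pow_le_pow_of_le_one (by norm_num) (by norm_num) hts.length_le)⟩
      constructor
      · intro hx
        refine ⟨htree, ?_⟩
        rw [← hrange] at hx
        obtain ⟨y, rfl⟩ := hx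
        refine ⟨y, fun n => ?_⟩
        rw [decide_eq_true_iff]
        refine ⟨y, matches_ofFn y n, ?_⟩
        rw [dist_self]
        positivity
      · rintro ⟨-, b, hb⟩
        have hYs : ∀ n : ℕ, ∃ y : ℕ → ℕ,
            Matches y (List.ofFn fun i : Fin n => b ↑i) ∧
            dist x (g y) < (1/2 : ℝ) ^ (List.ofFn fun i : Fin n => b ↑i).length := by
          intro n
          have := hb n
          rwa [decide_eq_true_iff] at this
        choose Y hY1 hY2 using hYs
        have hlen : ∀ n : ℕ, (List.ofFn fun i : Fin n => b ↑i).length = n := by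
          simp
        have htendY : Tendsto Y atTop (nhds b) := by
          rw [tendsto_pi_nhds]
          intro i
          apply Tendsto.congr' _ tendsto_const_nhds
          filter_upwards [eventually_ge_atTop (i + 1)] with n hn
          exact ((hY1 n).eq_of_ofFn (by omega)).symm
        have htendg : Tendsto (fun n => g (Y n)) atTop (nhds (g b)) :=
          (hg.tendsto b).comp htendY
        have htendx : Tendsto (fun n => g (Y n)) atTop (nhds x) := by
          rw [tendsto_iff_dist_tendsto_zero]
          have hlim : Tendsto (fun n : ℕ => (1/2 : ℝ) ^ n) atTop (nhds 0) :=
            tendsto_pow_atTop_nhds_zero_of_lt_one (by norm_num) (by norm_num)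
          exact squeeze_zero (fun n => dist_nonneg)
            (fun n => le_of_lt (by rw [dist_comm]; simpa [hlen n] using hY2 n)) hlim
        have : g b = x := tendsto_nhds_unique htendg htendx
        rw [← hrange]
        exact ⟨b, this⟩


instance : PolishSpace (((List (ℕ × ℕ) → Bool) × (ℕ → ℕ)) × (ℕ → ℕ)) := inferInstance

/-- The universal analytic set. -/
def UnivSet : Set ((List (ℕ × ℕ) → Bool) × (ℕ → ℕ)) :=
  {p | ∃ y : ℕ → ℕ, ∀ n : ℕ, p.1 (List.ofFn fun i : Fin n => (p.2 ↑i, y ↑i)) = true}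

lemma analytic_univSet : AnalyticSet UnivSet := by
  set V : Set (((List (ℕ × ℕ) → Bool) × (ℕ → ℕ)) × (ℕ → ℕ)) :=
    {q | ∀ n : ℕ, q.1.1 (List.ofFn fun i : Fin n => (q.1.2 ↑i, q.2 ↑i)) = true} with hV
  have hmeas : MeasurableSet V := by
    have : V = ⋂ n : ℕ, (fun q : (((List (ℕ × ℕ) → Bool) × (ℕ → ℕ)) × (ℕ → ℕ)) =>
        q.1.1 (List.ofFn fun i : Fin n => (q.1.2 ↑i, q.2 ↑i))) ⁻¹' {true} := by
      ext q; simp [hV]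
    rw [this]
    refine MeasurableSet.iInter fun n => ?_
    have hcomp : Measurable (fun q : (((List (ℕ × ℕ) → Bool) × (ℕ → ℕ)) × (ℕ → ℕ)) =>
        ((q.1.1, fun i : ℕ => (q.1.2 i, q.2 i)) : (List (ℕ × ℕ) → Bool) × (ℕ → ℕ × ℕ))) := by
      refine Measurable.prodMk (measurable_fst.comp measurable_fst) ?_
      refine measurable_pi_lambda _ fun i => Measurable.prodMk ?_ ?_
      · exact (measurable_pi_apply i).comp (measurable_snd.comp measurable_fst)
      · exact (measurable_pi_apply i).comp measurable_snd
    exact ((measurable_eval_branch n).comp hcomp) (measurableSet_singleton true)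
  have himg : UnivSet = Prod.fst '' V := by
    ext p
    constructor
    · rintro ⟨y, hy⟩
      exact ⟨(p, y), hy, rfl⟩
    · rintro ⟨⟨p', y⟩, hy, rfl⟩
      exact ⟨y, hy⟩
  rw [himg]
  exact hmeas.analyticSet.image_of_continuous continuous_fst

lemma univSet_universal (A : Set (ℕ → ℕ)) (hA : AnalyticSet A) :
    ∃ a : List (ℕ × ℕ) → Bool, ∀ x : ℕ → ℕ, x ∈ A ↔ (a, x) ∈ UnivSet := by
  classical
  rw [MeasureTheory.AnalyticSet_def] at hA
  rcases hA with rfl | ⟨g, hg, hrange⟩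
  · refine ⟨fun _ => false, fun x => ?_⟩
    simp only [mem_empty_iff_false, false_iff]
    rintro ⟨y, hy⟩
    exact absurd (hy 0) (by simp)
  · refine ⟨fun l => decide (∃ y : ℕ → ℕ,
      (∀ i : Fin l.length, y ↑i = (l.get i).2) ∧
      (∀ i : Fin l.length, g y ↑i = (l.get i).1)), fun x => ?_⟩
    constructor
    · intro hx
      rw [← hrange] at hx
      obtain ⟨y, rfl⟩ := hx
      refine ⟨y, fun n => ?_⟩
      rw [decide_eq_true_iff]
      exact ⟨y, fun i => by simp [List.get_ofFn], fun i => by simp [List.get_ofFn]⟩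
    · rintro ⟨y, hy⟩
      have hYs : ∀ n : ℕ, ∃ z : ℕ → ℕ,
          (∀ i : Fin n, z ↑i = y ↑i) ∧ (∀ i : Fin n, g z ↑i = x ↑i) := by
        intro n
        have := hy n
        rw [decide_eq_true_iff] at this
        obtain ⟨z, h1, h2⟩ := this
        refine ⟨z, fun i => ?_, fun i => ?_⟩
        · have := h1 ⟨i, by simp⟩
          simpa [List.get_ofFn] using this
        · have := h2 ⟨i, by simp⟩
          simpa [List.get_ofFn] using this
      choose Z hZ1 hZ2 using hYs
      have htendZ : Tendsto Z atTop (nhds y) := by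
        rw [tendsto_pi_nhds]
        intro i
        apply Tendsto.congr' _ tendsto_const_nhds
        filter_upwards [eventually_ge_atTop (i + 1)] with n hn
        exact (hZ1 n ⟨i, by omega⟩).symm
      have htendg : Tendsto (fun n => g (Z n)) atTop (nhds (g y)) :=
        (hg.tendsto y).comp htendZ
      have htendx : Tendsto (fun n => g (Z n)) atTop (nhds x) := by
        rw [tendsto_pi_nhds]
        intro i
        apply Tendsto.congr' _ tendsto_const_nhds
        filter_upwards [eventually_ge_atTop (i + 1)] with n hn
        exact (hZ2 n ⟨i, by omega⟩).symm
      have : g y = x := tendsto_nhds_unique htendg htendx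
      rw [← hrange]
      exact ⟨y, this⟩

lemma IFT_not_measurable : ¬ MeasurableSet IFT := by
  intro hB
  have key : ∀ (X : Type) [TopologicalSpace X] [PolishSpace X] [MeasurableSpace X]
      [BorelSpace X] (A : Set X), AnalyticSet A → MeasurableSet A := by
    intro X _ _ _ _ A hA
    obtain ⟨f, hf, -, hiff⟩ := part2 X A hA
    have : A = f ⁻¹' IFT := Set.ext fun x => hiff x
    rw [this]
    exact hf hB
  have hU : MeasurableSet UnivSet := key _ UnivSet analytic_univSet
  let e : (ℕ → ℕ) ≃ᵐ (List (ℕ × ℕ) → Bool) :=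
    PolishSpace.measurableEquivOfNotCountable not_countable_baire not_countable_code
  set D : Set (ℕ → ℕ) := {x | (e x, x) ∉ UnivSet} with hD
  have hDmeas : MeasurableSet D := by
    have : D = (fun x : ℕ → ℕ => ((e x, x) : (List (ℕ × ℕ) → Bool) × (ℕ → ℕ))) ⁻¹' UnivSetᶜ := rfl
    rw [this]
    exact (e.measurable.prodMk measurable_id) hU.compl
  obtain ⟨a, ha⟩ := univSet_universal D hDmeas.analyticSet
  have h1 := ha (e.symm a)
  rw [hD] at h1
  simp only [mem_setOf_eq, MeasurableEquiv.apply_symm_apply] at h1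
  tauto

/-- The set of ill-founded trees is a complete analytic set: it is analytic, every analytic
subset of a Polish space Borel-reduces to it (via a map taking values in the trees), and it
is not Borel. -/
theorem IFT_complete_analytic :
    MeasureTheory.AnalyticSet IFT ∧
    (∀ (X : Type) [TopologicalSpace X] [PolishSpace X] [MeasurableSpace X] [BorelSpace X]
      (A : Set X), MeasureTheory.AnalyticSet A →
      ∃ f : X → (List ℕ → Bool), Measurable f ∧ (∀ x, f x ∈ Trees) ∧
        ∀ x : X, x ∈ A ↔ f x ∈ IFT) ∧
    ¬ MeasurableSet IFT :=
  ⟨analytic_IFT, part2, IFT_not_measurable⟩
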